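/- Define f : ℕ → ℕ by f(3k) = binomial(2k,k)³, f(3k+1) = 4·binomial(2k,k)³, and f(3k+2) = 16·binomial(2k,k)³ for all k ∈ ℕ. Then f is a binomial multisum and f(n)/C_n → 3√3/π as n → ∞, where C_n is the n-th Catalan number; that is, f(n) ∼ (3√3/π)·C_n. -/

import Mathlib

/-- Modified binomial coefficient: `C(a,b) = a!/((a-b)!·b!)` if `0 ≤ b ≤ a`,
`C(-1,0) = 1`, and `0` otherwise. -/
def mbinom (a b : ℤ) : ℕ :=
  if 0 ≤ b ∧ b ≤ a then a.toNat.choose b.toNat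
  else if a = -1 ∧ b = 0 then 1 else 0

/-- The general term of a binomial multisum, indexed by `v ∈ ℤ^d`. -/
def multisumTerm {r d : ℕ} (A B : Fin r → Fin d → ℤ) (a' a'' b' b'' : Fin r → ℤ)
    (n : ℕ) (v : Fin d → ℤ) : ℕ :=
  ∏ i, mbinom ((∑ j, A i j * v j) + a' i * (n : ℤ) + a'' i)
              ((∑ j, B i j * v j) + b' i * (n : ℤ) + b'' i)

/-- `f : ℕ → ℕ` is a binomial multisum: for every `n` only finitely many `v ∈ ℤ^d`
contribute, and `f n` is the (finite) sum of the products of modified binomial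
coefficients of integer-coefficient affine functions of `(v, n)`. -/
def IsBinomialMultisum (f : ℕ → ℕ) : Prop :=
  ∃ (r d : ℕ) (A B : Fin r → Fin d → ℤ) (a' a'' b' b'' : Fin r → ℤ),
    (∀ n : ℕ, (Function.support (multisumTerm A B a' a'' b' b'' n)).Finite) ∧
    ∀ n : ℕ, f n = ∑ᶠ v : Fin d → ℤ, multisumTerm A B a' a'' b' b'' n v

section MultisumData

def msA : Fin 5 → Fin 2 → ℤ
  | 0, 0 => 3 | 4, 0 => -6 | _, 0 => 2 | _, _ => 0
def msB : Fin 5 → Fin 2 → ℤ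
  | 0, 0 => 3 | 4, 1 => 1 | 4, 0 => 0 | _, 0 => 1 | _, _ => 0
def msa' : Fin 5 → ℤ
  | 0 => -1 | 4 => 2 | _ => 0
def msa'' : Fin 5 → ℤ
  | 0 => 2 | _ => 0
def msb' : Fin 5 → ℤ
  | 0 => -1 | _ => 0
def msb'' : Fin 5 → ℤ
  | 0 => 2 | _ => 0

lemma term_eval (n : ℕ) (v : Fin 2 → ℤ) :
    multisumTerm msA msB msa' msa'' msb' msb'' n v =
    mbinom (3 * v 0 - n + 2) (3 * v 0 - n + 2) * mbinom (2 * v 0) (v 0) ^ 3 *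
      mbinom (2 * n - 6 * v 0) (v 1) := by
  simp only [multisumTerm, Fin.prod_univ_five, Fin.sum_univ_two, msA, msB, msa', msa'', msb',
    msb'']
  norm_num
  rw [show 3 * v 0 - n + 2 = 3 * v 0 + -(n:ℤ) + 2 by ring,
    show 2 * (n:ℤ) - 6 * v 0 = -6 * v 0 + 2 * n by ring]
  ring

lemma mbinom_cases {a b : ℤ} (h : mbinom a b ≠ 0) : (0 ≤ b ∧ b ≤ a) ∨ (a = -1 ∧ b = 0) := by
  unfold mbinom at h
  split at h
  · left; assumption
  · split at h
    · right; assumption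
    · exact absurd rfl h

lemma mbinom_natCast (a b : ℕ) : mbinom a b = a.choose b := by
  unfold mbinom
  split
  · simp
  · split
    · omega
    · rename_i h1 h2
      symm
      apply Nat.choose_eq_zero_of_lt
      omega

lemma term_support {n : ℕ} {v : Fin 2 → ℤ}
    (h : multisumTerm msA msB msa' msa'' msb' msb'' n v ≠ 0) :
    v 0 = (n : ℤ) / 3 ∧ 0 ≤ v 1 ∧ v 1 ≤ 4 := by
  rw [term_eval] at h
  have h1 : mbinom (3 * v 0 - n + 2) (3 * v 0 - n + 2) ≠ 0 := fun hz => h (by rw [hz]; ring)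
  have h3 : mbinom (2 * n - 6 * v 0) (v 1) ≠ 0 := fun hz => h (by rw [hz]; ring)
  have c1 := mbinom_cases h1
  have c3 := mbinom_cases h3
  have hn : (0:ℤ) ≤ (n:ℤ) := Int.natCast_nonneg n
  omega

noncomputable def msS (n : ℕ) : Finset (Fin 2 → ℤ) := (Finset.Icc (0:ℤ) 4).image (fun w => ![(n:ℤ)/3, w])

lemma support_subset (n : ℕ) :
    Function.support (multisumTerm msA msB msa' msa'' msb' msb'' n) ⊆ ↑(msS n) := by
  intro v hv
  obtain ⟨e0, e1, e2⟩ := term_support hv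
  simp only [msS, Finset.coe_image, Set.mem_image, Finset.mem_coe, Finset.mem_Icc]
  refine ⟨v 1, ⟨e1, e2⟩, ?_⟩
  funext i
  fin_cases i
  · simpa using e0.symm
  · simp

lemma sum_eval (n : ℕ) :
    ∑ᶠ v : Fin 2 → ℤ, multisumTerm msA msB msa' msa'' msb' msb'' n v =
      ∑ w ∈ Finset.Icc (0:ℤ) 4, multisumTerm msA msB msa' msa'' msb' msb'' n ![(n:ℤ)/3, w] := by
  rw [finsum_eq_sum_of_support_subset _ (support_subset n), msS, Finset.sum_image]
  intro w _ w' _ hww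
  simpa using congrFun hww 1

lemma term_explicit (k r : ℕ) (w : ℤ) :
    multisumTerm msA msB msa' msa'' msb' msb'' (3*k+r) ![(k:ℤ), w] =
      mbinom (2 - r) (2 - r) * (Nat.choose (2*k) k)^3 * mbinom (2*r) w := by
  rw [term_eval]
  simp only [Matrix.cons_val_zero, Matrix.cons_val_one, Matrix.head_cons]
  rw [show 3 * (k:ℤ) - ((3*k+r : ℕ):ℤ) + 2 = 2 - r by push_cast; ring,
    show 2 * ((3*k+r : ℕ):ℤ) - 6 * (k:ℤ) = 2*(r:ℤ) by push_cast; ring]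
  have hc : mbinom (2 * (k:ℤ)) (k:ℤ) = Nat.choose (2*k) k := by
    have := mbinom_natCast (2*k) k
    push_cast at this
    exact this
  rw [hc]

lemma icc04 : Finset.Icc (0:ℤ) 4 = {0, 1, 2, 3, 4} := by decide

lemma sum_case (k r : ℕ) (hr : r < 3) :
    ∑ w ∈ Finset.Icc (0:ℤ) 4, multisumTerm msA msB msa' msa'' msb' msb'' (3*k+r) ![(k:ℤ), w] =
      4^r * Nat.choose (2*k) k ^ 3 := by
  have hterm : ∀ w ∈ Finset.Icc (0:ℤ) 4, multisumTerm msA msB msa' msa'' msb' msb''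
      (3*k+r) ![(k:ℤ), w] = mbinom (2 - r) (2 - r) * (Nat.choose (2*k) k)^3 * mbinom (2*r) w :=
    fun w _ => term_explicit k r w
  rw [Finset.sum_congr rfl hterm, icc04]
  interval_cases r <;>
    norm_num [Finset.sum_insert, Finset.mem_insert, Finset.mem_singleton, Finset.sum_singleton,
      mbinom, show ((2:ℤ).toNat) = 2 from rfl, show ((4:ℤ).toNat) = 4 from rfl,
      show ((3:ℤ).toNat) = 3 from rfl, show Nat.choose 4 2 = 6 from rfl,
      show Nat.choose 4 3 = 4 from rfl] <;> ring

end MultisumData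

section Asymptotics

open Filter Real Stirling

lemma stirling_id (k : ℕ) (hk : 1 ≤ k) :
    (Nat.choose (2*k) k : ℝ) * Real.sqrt k / 4^k = stirlingSeq (2*k) / (stirlingSeq k)^2 := by
  have hkR : (0:ℝ) < k := by exact_mod_cast hk
  have hs : (0:ℝ) < Real.sqrt k := Real.sqrt_pos.mpr hkR
  have he : (0:ℝ) < Real.exp 1 := Real.exp_pos 1
  have hke : (0:ℝ) < ((k:ℝ) / Real.exp 1) ^ k := by positivity
  have hfac : (0:ℝ) < (k.factorial : ℝ) := by exact_mod_cast k.factorial_pos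
  have hchoose : ((Nat.choose (2*k) k : ℕ) : ℝ) * (k.factorial : ℝ) * (k.factorial : ℝ) = ((2*k).factorial : ℝ) := by
    have := Nat.choose_mul_factorial_mul_factorial (show k ≤ 2*k by omega)
    have h2 : (2*k - k) = k := by omega
    rw [h2] at this
    exact_mod_cast congrArg (Nat.cast : ℕ → ℝ) this
  have hsqrt4 : Real.sqrt (2*((2*k : ℕ):ℝ)) = 2 * Real.sqrt k := by
    push_cast
    rw [show (2:ℝ)*(2*k) = 2^2 * k by ring,
      Real.sqrt_mul (by positivity), Real.sqrt_sq (by norm_num)]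
  have hpow : (((2*k : ℕ):ℝ) / Real.exp 1) ^ (2*k) = 4^k * (((k:ℝ)/Real.exp 1)^k)^2 := by
    push_cast
    rw [show (2:ℝ)*k/Real.exp 1 = 2 * ((k:ℝ)/Real.exp 1) by ring, mul_pow, ← pow_mul]
    rw [show (2:ℝ)^(2*k) = 4^k by rw [pow_mul]; norm_num, show k*2 = 2*k by ring]
  rw [stirlingSeq, stirlingSeq, hsqrt4, hpow, ← hchoose]
  field_simp
  ring_nf
  rw [Real.sq_sqrt (by positivity), Real.sq_sqrt (by positivity)]
  ring

lemma g_tendsto :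
    Tendsto (fun k : ℕ => (Nat.choose (2*k) k : ℝ) * Real.sqrt k / 4^k) atTop
      (nhds (1 / Real.sqrt π)) := by
  have hπ : Real.sqrt π ≠ 0 := by positivity
  have h1 : Tendsto (fun k : ℕ => stirlingSeq (2*k)) atTop (nhds (Real.sqrt π)) :=
    tendsto_stirlingSeq_sqrt_pi.comp (tendsto_atTop_atTop.mpr fun b => ⟨b, fun a ha => by omega⟩)
  have h2 : Tendsto (fun k : ℕ => (stirlingSeq k)^2) atTop (nhds ((Real.sqrt π)^2)) :=
    tendsto_stirlingSeq_sqrt_pi.pow 2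
  have h3 := h1.div h2 (by positivity)
  have heq : Real.sqrt π / (Real.sqrt π)^2 = 1 / Real.sqrt π := by
    rw [sq]
    field_simp
  rw [heq] at h3
  apply h3.congr'
  filter_upwards [eventually_ge_atTop 1] with k hk
  exact (stirling_id k hk).symm

lemma ratio_tendsto (r : ℕ) :
    Tendsto (fun k : ℕ => ((4:ℝ)^r * (Nat.choose (2*k) k : ℝ)^3) / (catalan (3*k+r) : ℝ))
      atTop (nhds (3 * Real.sqrt 3 / π)) := by
  have hπ : (0:ℝ) < π := Real.pi_pos
  have hsπ : Real.sqrt π ≠ 0 := by positivity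
  set g : ℕ → ℝ := fun k => (Nat.choose (2*k) k : ℝ) * Real.sqrt k / 4^k with hgdef
  have hcomp : Tendsto (fun k : ℕ => g (3*k+r)) atTop (nhds (1/Real.sqrt π)) :=
    g_tendsto.comp (tendsto_atTop_atTop.mpr fun b => ⟨b, fun a ha => by omega⟩)
  have hG : Tendsto (fun k => (g k)^3 / g (3*k+r)) atTop
      (nhds ((1/Real.sqrt π)^3/(1/Real.sqrt π))) :=
    (g_tendsto.pow 3).div hcomp (by positivity)
  have hinv : Tendsto (fun k : ℕ => (1:ℝ)/k) atTop (nhds 0) := tendsto_one_div_atTop_nhds_zero_nat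
  have hH1 : Tendsto (fun k : ℕ => (((3*k+r : ℕ):ℝ) + 1)/(Real.sqrt k * Real.sqrt k)) atTop
      (nhds 3) := by
    have base : Tendsto (fun k : ℕ => 3 + ((r:ℝ)+1) * (1/k)) atTop (nhds (3 + ((r:ℝ)+1) * 0)) :=
      tendsto_const_nhds.add (tendsto_const_nhds.mul hinv)
    rw [mul_zero, add_zero] at base
    apply base.congr'
    filter_upwards [eventually_ge_atTop 1] with k hk
    have hkR : (0:ℝ) < k := by exact_mod_cast hk
    rw [Real.mul_self_sqrt hkR.le]
    push_cast
    field_simp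
    ring
  have hH2 : Tendsto (fun k : ℕ => Real.sqrt ((3*k+r : ℕ):ℝ) / Real.sqrt k) atTop
      (nhds (Real.sqrt 3)) := by
    have inner : Tendsto (fun k : ℕ => (((3*k+r : ℕ):ℝ))/k) atTop (nhds 3) := by
      have base : Tendsto (fun k : ℕ => 3 + (r:ℝ) * (1/k)) atTop (nhds (3 + (r:ℝ) * 0)) :=
        tendsto_const_nhds.add (tendsto_const_nhds.mul hinv)
      rw [mul_zero, add_zero] at base
      apply base.congr'
      filter_upwards [eventually_ge_atTop 1] with k hk
      have hkR : (0:ℝ) < k := by exact_mod_cast hk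
      push_cast
      field_simp
    have := (Real.continuous_sqrt.tendsto 3).comp inner
    apply this.congr'
    filter_upwards [eventually_ge_atTop 1] with k hk
    have hkR : (0:ℝ) < k := by exact_mod_cast hk
    simp only [Function.comp]
    rw [Real.sqrt_div (by positivity : (0:ℝ) ≤ ((3*k+r : ℕ):ℝ))]
  have hmul := hG.mul (hH1.mul hH2)
  have hval : (1/Real.sqrt π)^3/(1/Real.sqrt π) * (3 * Real.sqrt 3) = 3 * Real.sqrt 3 / π := by
    rw [pow_succ, mul_div_assoc, div_self (by positivity : (1:ℝ)/Real.sqrt π ≠ 0), mul_one,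
      div_pow, one_pow, Real.sq_sqrt hπ.le]
    ring
  rw [hval] at hmul
  apply hmul.congr'
  filter_upwards [eventually_ge_atTop 1] with k hk
  have hkR : (0:ℝ) < k := by exact_mod_cast hk
  have hsk : (0:ℝ) < Real.sqrt k := Real.sqrt_pos.mpr hkR
  have hnR : (0:ℝ) < ((3*k+r : ℕ):ℝ) := by positivity
  have hsn : (0:ℝ) < Real.sqrt ((3*k+r : ℕ):ℝ) := Real.sqrt_pos.mpr hnR
  have hB : (0:ℝ) < (Nat.choose (2*(3*k+r)) (3*k+r) : ℝ) := by
    exact_mod_cast Nat.choose_pos (by omega)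
  have hcat : (catalan (3*k+r) : ℝ) = (Nat.choose (2*(3*k+r)) (3*k+r) : ℝ) / (((3*k+r : ℕ):ℝ) + 1) := by
    have h := succ_mul_catalan_eq_centralBinom (3*k+r)
    rw [Nat.centralBinom] at h
    have : (((3*k+r : ℕ):ℝ) + 1) * (catalan (3*k+r) : ℝ) = (Nat.choose (2*(3*k+r)) (3*k+r) : ℝ) := by
      exact_mod_cast congrArg (Nat.cast : ℕ → ℝ) h
    rw [← this]
    field_simp
  rw [hgdef]
  simp only
  rw [hcat]
  rw [show (4:ℝ)^(3*k+r) = ((4:ℝ)^k)^3 * 4^r by rw [pow_add]; ring]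
  have hss : Real.sqrt k * Real.sqrt k = (k:ℝ) := Real.mul_self_sqrt hkR.le
  field_simp

lemma tendsto_of_mod3 {u : ℕ → ℝ} {L : ℝ}
    (H : ∀ r : ℕ, r < 3 → Tendsto (fun k => u (3*k+r)) atTop (nhds L)) :
    Tendsto u atTop (nhds L) := by
  rw [Metric.tendsto_atTop]
  intro ε hε
  obtain ⟨N0, hN0⟩ := Metric.tendsto_atTop.mp (H 0 (by omega)) ε hε
  obtain ⟨N1, hN1⟩ := Metric.tendsto_atTop.mp (H 1 (by omega)) ε hε
  obtain ⟨N2, hN2⟩ := Metric.tendsto_atTop.mp (H 2 (by omega)) ε hε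
  refine ⟨3*(N0+N1+N2)+3, fun n hn => ?_⟩
  rcases (show n % 3 = 0 ∨ n % 3 = 1 ∨ n % 3 = 2 by omega) with h|h|h
  · rw [show n = 3*(n/3)+0 by omega]; exact hN0 _ (by omega)
  · rw [show n = 3*(n/3)+1 by omega]; exact hN1 _ (by omega)
  · rw [show n = 3*(n/3)+2 by omega]; exact hN2 _ (by omega)

end Asymptotics

/-- The function defined by `f(3k) = C(2k,k)³`, `f(3k+1) = 4·C(2k,k)³`,
`f(3k+2) = 16·C(2k,k)³` is a binomial multisum (= tile counting function) and satisfies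
`f(n) ∼ (3√3/π)·C_n`, where `C_n` is the `n`-th Catalan number. -/
theorem tileCounting_asymptotically_catalan (f : ℕ → ℕ)
    (h0 : ∀ k : ℕ, f (3 * k) = Nat.choose (2 * k) k ^ 3)
    (h1 : ∀ k : ℕ, f (3 * k + 1) = 4 * Nat.choose (2 * k) k ^ 3)
    (h2 : ∀ k : ℕ, f (3 * k + 2) = 16 * Nat.choose (2 * k) k ^ 3) :
    IsBinomialMultisum f ∧
    Filter.Tendsto (fun n : ℕ => (f n : ℝ) / (catalan n : ℝ)) Filter.atTop
      (nhds (3 * Real.sqrt 3 / Real.pi)) := by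
  constructor
  · refine ⟨5, 2, msA, msB, msa', msa'', msb', msb'',
      fun n => Set.Finite.subset (Finset.finite_toSet (msS n)) (support_subset n),
      fun n => ?_⟩
    obtain ⟨k, r, hr, rfl⟩ : ∃ k r, r < 3 ∧ n = 3*k + r := ⟨n/3, n%3, by omega, by omega⟩
    rw [sum_eval, show (((3*k+r : ℕ):ℤ))/3 = (k:ℤ) by omega, sum_case k r hr]
    interval_cases r
    · rw [show 3*k+0 = 3*k from rfl, h0 k]; ring
    · rw [h1 k]; ring
    · rw [h2 k]; ring
  · apply tendsto_of_mod3
    intro r hr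
    apply (ratio_tendsto r).congr
    intro k
    interval_cases r
    · rw [show 3*k+0 = 3*k from rfl, h0 k]; push_cast; ring
    · rw [h1 k]; push_cast; ring
    · rw [h2 k]; push_cast; ring
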